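/- arXiv:2107.12411 — 3 statements merged into one kernel-verified Lean document; each statement's English description precedes it below -/
import Mathlib

section
/- If r* ≥ α/8 and Gonzalez's greedy selection yields centers achieving covering radius at most 2·r_{p+q}(P), then selecting a maximal (3α/4)-separated subset of these centers yields a covering of P with radius at most 2·r_{p+q}(P) + 3α/4 ≤ 8·r*, where r* = r_{p∨q,α}(P). -/
/-- If r* ≥ α/8 and Gonzalez's greedy centers achieve covering radius at most 2·r_{p+q}(P),
then a maximal (3α/4)-separated subset of these centers covers P with radius at most
2·r_{p+q}(P) + 3α/4 ≤ 8·r*. -/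
theorem maximal_subset_covering_bound
    {M : Type*} [MetricSpace M] (P : Set M) (hP : P.Finite)
    (α rk rstar : ℝ) (hα : 0 ≤ α)
    (hrk : 0 ≤ rk) (hrstar_sep : α / 8 ≤ rstar) (hrstar_ge : rk ≤ rstar)
    (k t : ℕ) (ht : t ≤ k) (x : Fin k → M) (hxP : ∀ i, x i ∈ P)
    (hcover : ∀ y ∈ P, ∃ i, dist y (x i) ≤ 2 * rk)
    (hmax : ∀ i : Fin k, t ≤ (i : ℕ) →
      ∃ j : Fin k, (j : ℕ) < t ∧ dist (x i) (x j) ≤ 3 * α / 4) :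
    (∀ y ∈ P, ∃ j : Fin k, (j : ℕ) < t ∧ dist y (x j) ≤ 2 * rk + 3 * α / 4) ∧
      2 * rk + 3 * α / 4 ≤ 8 * rstar := by
  constructor
  · intro y hy
    obtain ⟨i, hi⟩ := hcover y hy
    by_cases h : (i : ℕ) < t
    · exact ⟨i, h, by linarith⟩
    · obtain ⟨j, hj, hd⟩ := hmax i (le_of_not_gt h)
      exact ⟨j, hj, (dist_triangle y (x i) (x j)).trans (by linarith)⟩
  · linarith
end

section
/- Color-swapping lemma: let u_{i−1} ≤ u_i ≤ u_{i+1} ≤ u_{i+2} be four centers on a line where u_{i−1}, u_{i+1} are red and u_i, u_{i+2} are blue. If the original configuration satisfies that every red-blue pair among all centers is at distance ≥ α, then after swapping the colors of u_i and u_{i+1} (making u_i red and u_{i+1} blue), every red-blue pair among these four centers is still at distance ≥ α. -/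
/-- Color-swapping lemma: for centers u₀ ≤ u₁ ≤ u₂ ≤ u₃ on a line with u₀, u₂ red and
u₁, u₃ blue, if every original red-blue pair is at distance ≥ α, then after swapping the
colors of u₁ and u₂ (so u₀, u₁ are red and u₂, u₃ are blue), every red-blue pair among
these four centers is still at distance ≥ α. -/
theorem color_swapping
    (α u₀ u₁ u₂ u₃ : ℝ) (hα : 0 ≤ α)
    (h01 : u₀ ≤ u₁) (h12 : u₁ ≤ u₂) (h23 : u₂ ≤ u₃)
    (s01 : α ≤ |u₀ - u₁|) (s03 : α ≤ |u₀ - u₃|)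
    (s21 : α ≤ |u₂ - u₁|) (s23 : α ≤ |u₂ - u₃|) :
    α ≤ |u₀ - u₂| ∧ α ≤ |u₀ - u₃| ∧ α ≤ |u₁ - u₂| ∧ α ≤ |u₁ - u₃| := by
  rw [abs_sub_comm u₂ u₁] at s21
  rw [abs_of_nonpos (by linarith)] at s01 s03 s21 s23
  refine ⟨?_, ?_, ?_, ?_⟩ <;> rw [abs_of_nonpos (by linarith)] <;> linarith
end

section
/- If x_1 < x_2 < ... < x_N are the sorted endpoints of n nonempty intervals on ℝ and H ⊂ ℝ is any finite hitting set for the intervals, then replacing each point h ∈ H by a suitable endpoint of the face (arrangement cell) containing h yields a hitting set contained in {x_1,...,x_N} of the same cardinality. -/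
/-- Any finite hitting set for a finite family of nonempty closed intervals can be
replaced by a hitting set of no larger cardinality consisting only of interval
endpoints. -/
theorem hitting_set_on_endpoints
    (n : ℕ) (a b : Fin n → ℝ) (hab : ∀ i, a i ≤ b i)
    (H : Finset ℝ) (hH : ∀ i, ∃ h ∈ H, h ∈ Set.Icc (a i) (b i)) :
    ∃ H' : Finset ℝ, H'.card ≤ H.card ∧
      (↑H' : Set ℝ) ⊆ Set.range a ∪ Set.range b ∧
      ∀ i, ∃ h ∈ H', h ∈ Set.Icc (a i) (b i) := by
  classical
  have key : ∀ h : ℝ, (∃ i, h ∈ Set.Icc (a i) (b i)) →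
      ∃ g, g ∈ Set.range a ∧ ∀ i, h ∈ Set.Icc (a i) (b i) → g ∈ Set.Icc (a i) (b i) := by
    intro h hh
    obtain ⟨i0, hi0⟩ := hh
    set S : Finset (Fin n) := Finset.univ.filter (fun i => h ∈ Set.Icc (a i) (b i)) with hSdef
    have hS : S.Nonempty := ⟨i0, Finset.mem_filter.mpr ⟨Finset.mem_univ _, hi0⟩⟩
    obtain ⟨j, hjS, hj⟩ := Finset.exists_max_image S a hS
    have hji : h ∈ Set.Icc (a j) (b j) := (Finset.mem_filter.mp hjS).2
    refine ⟨a j, ⟨j, rfl⟩, fun i hi => ⟨hj i (Finset.mem_filter.mpr ⟨Finset.mem_univ _, hi⟩), hji.1.trans hi.2⟩⟩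
  let g : ℝ → ℝ := fun h =>
    if c : ∃ i, h ∈ Set.Icc (a i) (b i) then (key h c).choose else 0
  refine ⟨(H.filter (fun h => ∃ i, h ∈ Set.Icc (a i) (b i))).image g,
    le_trans (Finset.card_image_le) (Finset.card_filter_le _ _), ?_, ?_⟩
  · intro x hx
    simp only [Finset.coe_image, Set.mem_image, Finset.mem_coe, Finset.mem_filter] at hx
    obtain ⟨h, ⟨-, hc⟩, rfl⟩ := hx
    left
    simp only [g, dif_pos hc]
    exact (key h hc).choose_spec.1
  · intro i
    obtain ⟨h, hhH, hhi⟩ := hH i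
    have hc : ∃ i, h ∈ Set.Icc (a i) (b i) := ⟨i, hhi⟩
    refine ⟨g h, Finset.mem_image_of_mem g (Finset.mem_filter.mpr ⟨hhH, hc⟩), ?_⟩
    simp only [g, dif_pos hc]
    exact (key h hc).choose_spec.2 i hhi
end
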